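/- Let t, t₁₂ ∈ ℂ with t₁₂ ≠ 2 and t₁₂ ≠ t² − 2. Then there exists a pair (a₁, a₂) of elements of SL(2,ℂ), each ≠ ±e and of trace t, with tr(a₁a₂) = t₁₂; moreover, for any two such pairs (a₁, a₂) and (a₁′, a₂′) there exists c ∈ SL(2,ℂ) with c a₁ c⁻¹ = a₁′ and c a₂ c⁻¹ = a₂′. -/

import Mathlib

open Matrix
abbrev M2 := Matrix (Fin 2) (Fin 2) ℂ
abbrev SL2 := Matrix.SpecialLinearGroup (Fin 2) ℂ

lemma sq_ex (d : ℂ) : ∃ z : ℂ, z*z = d := by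
  obtain ⟨z, hz⟩ := IsAlgClosed.exists_pow_nat_eq d (n := 2) zero_lt_two
  exact ⟨z, by rw [← hz]; ring⟩

lemma Kcase (t t12 ζ l m p q r s : ℂ)
    (hζ : ζ*ζ - t12*ζ + 1 = 0) (hζ1 : ζ ≠ 1)
    (hζl : ζ ≠ l*l) (hζm : ζ ≠ m*m)
    (hlm : l*m = 1) (hsum : l + m = t)
    (hps : p + s = t) (hdet : p*s - q*r = 1) (htr : q - r + t*s = t12)
    (h1 : ζ + r = l*s)
    (h2 : (ζ*t - p + l*(q-ζ)) * (ζ*t - p + m*(q-ζ)) = 0) : False := by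
  have hp : p = t - s := by linear_combination hps
  have hr : r = l*s - ζ := by linear_combination h1
  have hq : q = t12 - ζ - m*s := by linear_combination htr + h1 + s*hsum
  have key : s*(ζ-1)*(l - m*ζ) = 0 := by
    linear_combination ζ*hdet - ζ*s*hp + ζ*q*hr + ζ*(l*s-ζ)*hq + (ζ - l*s)*hζ + ζ*s*hsum - ζ*s^2*hlm
  have hlmζ : l - m*ζ ≠ 0 := by
    intro h
    apply hζl
    linear_combination -l*h - ζ*hlm
  have hs : s = 0 := by
    rcases mul_eq_zero.mp key with h | h
    · rcases mul_eq_zero.mp h with h' | h'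
      · exact h'
      · exact absurd (by linear_combination h') hζ1
    · exact absurd h hlmζ
  have hp0 : p = t := by rw [hp, hs]; ring
  have hq0 : q = t12 - ζ := by rw [hq, hs]; ring
  rcases mul_eq_zero.mp h2 with hF | hF
  · have hF0 : ζ*t - t + l*(t12 - 2*ζ) = 0 := by linear_combination hF + hp0 - l*hq0
    have hfac : (ζ - 1)*(ζ*t - l*(1+ζ)) = 0 := by linear_combination ζ*hF0 + l*hζ
    rcases mul_eq_zero.mp hfac with h' | h'
    · exact hζ1 (by linear_combination h')
    · exact hζl (by linear_combination l*h' + l*ζ*hsum - ζ*hlm)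
  · have hF0 : ζ*t - t + m*(t12 - 2*ζ) = 0 := by linear_combination hF + hp0 - m*hq0
    have hfac : (ζ - 1)*(ζ*t - m*(1+ζ)) = 0 := by linear_combination ζ*hF0 + m*hζ
    rcases mul_eq_zero.mp hfac with h' | h'
    · exact hζ1 (by linear_combination h')
    · exact hζm (by linear_combination m*h' + m*ζ*hsum - ζ*hlm)

lemma K (t t12 ζ p q r s : ℂ) (h2 : t12 ≠ 2) (ht : t12 ≠ t^2 - 2)
    (hζ : ζ*ζ - t12*ζ + 1 = 0)
    (hps : p + s = t) (hdet : p*s - q*r = 1) (htr : q - r + t*s = t12) :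
    ∃ α β : ℂ, (α*p - β*r = t*α + ζ*β) ∧ (α*q - β*s = -(t*β) + ζ*(α + t*β)) ∧
      (ζ*(β*p + (α+t*β)*r) = -α) ∧ (ζ*(β*q + (α+t*β)*s) = β) ∧
      α*α + t*α*β + β*β ≠ 0 := by
  obtain ⟨l, hl⟩ : ∃ l : ℂ, l*l - t*l + 1 = 0 := by
    obtain ⟨τ, hτ⟩ := sq_ex (t^2 - 4)
    refine ⟨(t+τ)/2, ?_⟩
    field_simp
    first
    | linear_combination hτ
    | linear_combination -hτ
    | linear_combination 2*hτ
  obtain ⟨m, hmdef⟩ : ∃ m : ℂ, m = t - l := ⟨_, rfl⟩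
  have hlm : l*m = 1 := by rw [hmdef]; linear_combination -hl
  have hm : m*m - t*m + 1 = 0 := by rw [hmdef]; linear_combination hl
  have hsum : l + m = t := by rw [hmdef]; ring
  have hl0 : l ≠ 0 := by intro h; rw [h] at hlm; simp at hlm
  have hm0 : m ≠ 0 := by intro h; rw [h] at hlm; simp at hlm
  have hζ1 : ζ ≠ 1 := by
    intro h; apply h2; rw [h] at hζ; linear_combination -hζ
  have hζl : ζ ≠ l*l := by
    intro h
    apply ht
    subst h
    have hll : l*l ≠ 0 := mul_ne_zero hl0 hl0
    have : t12*(l*l) = (t^2-2)*(l*l) := by linear_combination -hζ + (t*l + l*l + 1)*hl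
    exact mul_right_cancel₀ hll this
  have hζm : ζ ≠ m*m := by
    intro h
    apply ht
    subst h
    have hmm : m*m ≠ 0 := mul_ne_zero hm0 hm0
    have : t12*(m*m) = (t^2-2)*(m*m) := by linear_combination -hζ + (t*m + m*m + 1)*hm
    exact mul_right_cancel₀ hmm this
  by_cases hD0 : (ζ+r)*(ζ+r) + t*(ζ+r)*(-s) + (-s)*(-s) = 0
  · by_cases hD1 : (ζ*t-p)*(ζ*t-p) + t*(ζ*t-p)*(q-ζ) + (q-ζ)*(q-ζ) = 0
    · exfalso
      have hf0 : (ζ+r - l*s)*(ζ+r - m*s) = 0 := by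
        linear_combination hD0 - (ζ+r)*s*hsum + s^2*hlm
      have hf1 : (ζ*t-p + l*(q-ζ))*(ζ*t-p + m*(q-ζ)) = 0 := by
        linear_combination hD1 + (ζ*t-p)*(q-ζ)*hsum + (q-ζ)^2*hlm
      rcases mul_eq_zero.mp hf0 with h0 | h0
      · exact Kcase t t12 ζ l m p q r s hζ hζ1 hζl hζm hlm hsum hps hdet htr
          (by linear_combination h0) hf1
      · exact Kcase t t12 ζ m l p q r s hζ hζ1 hζm hζl (by linear_combination hlm)
          (by linear_combination hsum) hps hdet htr (by linear_combination h0)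
          (by linear_combination hf1)
    · refine ⟨ζ*t-p, q-ζ, ?_, ?_, ?_, ?_, hD1⟩
      · linear_combination (ζ*t - p)*hps + hdet + hζ - ζ*htr
      · linear_combination (ζ - q)*hps
      · linear_combination p*ζ*htr - p*hζ - ζ*t*hdet
      · linear_combination q*ζ*htr - q*hζ - ζ*hdet
  · refine ⟨ζ+r, -s, ?_, ?_, ?_, ?_, hD0⟩
    · linear_combination (ζ+r)*hps
    · linear_combination ζ*htr - hζ - hdet + s*hps
    · linear_combination r*hζ - r*ζ*htr - ζ*hdet
    · linear_combination s*hζ - s*ζ*htr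

lemma step1core (t a b c d v₀ v₁ : ℂ) (htr : a + d = t) (hdet : a*d - b*c = 1)
    (hd0 : v₀*(c*v₀+d*v₁) - v₁*(a*v₀+b*v₁) ≠ 0) :
    ∃ P : M2, P.det = 1 ∧ !![a,b;c,d] * P = P * !![0,-1;1,t] := by
  obtain ⟨σ, hσ⟩ := sq_ex (v₀*(c*v₀+d*v₁) - v₁*(a*v₀+b*v₁))
  have hσ0 : σ ≠ 0 := by rintro rfl; apply hd0; rw [← hσ]; ring
  refine ⟨!![v₀/σ, (a*v₀+b*v₁)/σ; v₁/σ, (c*v₀+d*v₁)/σ], ?_, ?_⟩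
  · rw [Matrix.det_fin_two_of]
    field_simp
    linear_combination -hσ
  · ext i j
    fin_cases i <;> fin_cases j <;>
      · simp [Matrix.mul_apply, Fin.sum_univ_two]
        field_simp
        try first
        | linear_combination σ^2*((a*v₀+b*v₁)*htr - v₀*hdet)
        | linear_combination σ^2*((c*v₀+d*v₁)*htr - v₁*hdet)
        | linear_combination (a*v₀+b*v₁)*htr - v₀*hdet
        | linear_combination (c*v₀+d*v₁)*htr - v₁*hdet

lemma step2 (t t12 ζ p q r s : ℂ) (h2 : t12 ≠ 2) (ht : t12 ≠ t^2 - 2)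
    (hζ0 : ζ ≠ 0) (hζ : ζ*ζ - t12*ζ + 1 = 0)
    (hps : p + s = t) (hdet : p*s - q*r = 1) (htr : q - r + t*s = t12) :
    ∃ h : M2, h.det = 1 ∧ h * !![0,-1;1,t] = !![0,-1;1,t] * h ∧
      h * !![p,q;r,s] = !![t,ζ;-ζ⁻¹,0] * h := by
  obtain ⟨α, β, e00, e01, e10, e11, hQ⟩ := K t t12 ζ p q r s h2 ht hζ hps hdet htr
  obtain ⟨τ, hτ⟩ := sq_ex (α*α + t*α*β + β*β)
  have hτ0 : τ ≠ 0 := by rintro rfl; apply hQ; rw [← hτ]; ring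
  refine ⟨!![α/τ, -(β/τ); β/τ, (α+t*β)/τ], ?_, ?_, ?_⟩
  · rw [Matrix.det_fin_two_of]
    field_simp
    first
    | linear_combination hτ
    | linear_combination 2*hτ
    | linear_combination -hτ
  · ext i j
    fin_cases i <;> fin_cases j <;>
      · simp [Matrix.mul_apply, Fin.sum_univ_two]
        try field_simp
        try ring
  · ext i j
    fin_cases i <;> fin_cases j <;>
      · simp [Matrix.mul_apply, Fin.sum_univ_two]
        try field_simp
        try first
        | linear_combination e00
        | linear_combination (τ*τ)*e01
        | linear_combination e10
        | linear_combination e11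
        | linear_combination (τ*τ)*e00
        | linear_combination e01
        | linear_combination (τ*τ)*e10
        | linear_combination (τ*τ)*e11
        | linear_combination -e10
        | linear_combination -(τ*τ)*e10
        | linear_combination τ*e10
        | linear_combination -τ*e10
        | linear_combination τ*e11

noncomputable def Csl (t : ℂ) : SL2 :=
  ⟨!![0,-1;1,t], by simp [Matrix.det_fin_two_of]⟩

lemma trace_conj (c a : SL2) :
    Matrix.trace ((c*a*c⁻¹ : SL2) : M2) = Matrix.trace (a : M2) := by
  have h1 : ((c*a*c⁻¹ : SL2) : M2) = (c:M2) * a * (c⁻¹:SL2) := by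
    simp [Matrix.SpecialLinearGroup.coe_mul]
  rw [h1, Matrix.trace_mul_comm]
  have h2 : ((c⁻¹:SL2) : M2) * ((c:M2) * a) = a := by
    rw [← mul_assoc, ← Matrix.SpecialLinearGroup.coe_mul, inv_mul_cancel]
    simp
  rw [h2]

lemma conj_eq_of (c a x : SL2) (h : (c:M2) * a = (x:M2) * c) : c * a * c⁻¹ = x := by
  have : c * a = x * c := Subtype.coe_injective
    (by simp [Matrix.SpecialLinearGroup.coe_mul, h])
  rw [this, mul_inv_cancel_right]

lemma coe_conj (c a : SL2) (N : M2) (hmat : (c:M2) * a = N * c) :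
    ((c*a*c⁻¹ : SL2) : M2) = N := by
  have h1 : ((c*a*c⁻¹ : SL2) : M2) * (c : M2) = N * c := by
    have e : (c*a*c⁻¹)*c = c*a := by group
    calc ((c*a*c⁻¹ : SL2) : M2) * (c : M2) = ((c*a*c⁻¹*c : SL2) : M2) :=
          (Matrix.SpecialLinearGroup.coe_mul _ _).symm
      _ = ((c*a : SL2) : M2) := by rw [e]
      _ = (c:M2) * a := by simp [Matrix.SpecialLinearGroup.coe_mul]
      _ = N * c := hmat
  have h2 : ((c*a*c⁻¹ : SL2) : M2) * ((c : M2) * (c⁻¹ : SL2)) =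
      N * ((c : M2) * (c⁻¹ : SL2)) := by
    rw [← mul_assoc, h1, mul_assoc]
  rwa [← Matrix.SpecialLinearGroup.coe_mul, mul_inv_cancel,
    Matrix.SpecialLinearGroup.coe_one, mul_one, mul_one] at h2

lemma step1 (t : ℂ) (a₁ : SL2) (h1 : (a₁:M2) ≠ 1) (hm1 : (a₁:M2) ≠ -1)
    (htr : Matrix.trace (a₁:M2) = t) :
    ∃ g : SL2, g * a₁ * g⁻¹ = Csl t := by
  set m : M2 := (a₁:M2) with hmdef
  have hM : m = !![m 0 0, m 0 1; m 1 0, m 1 1] := Matrix.eta_fin_two m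
  have hdet : m 0 0 * m 1 1 - m 0 1 * m 1 0 = 1 := by
    have := a₁.prop
    rwa [Matrix.det_fin_two] at this
  have htr' : m 0 0 + m 1 1 = t := by rwa [Matrix.trace_fin_two] at htr
  have main : ∃ P : M2, P.det = 1 ∧
      !![m 0 0, m 0 1; m 1 0, m 1 1] * P = P * !![0,-1;1,t] := by
    by_cases hc : m 1 0 ≠ 0
    · exact step1core t (m 0 0) (m 0 1) (m 1 0) (m 1 1) 1 0 htr' hdet (by simpa using hc)
    · push_neg at hc
      by_cases hb : m 0 1 ≠ 0
      · exact step1core t (m 0 0) (m 0 1) (m 1 0) (m 1 1) 0 1 htr' hdet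
          (by simpa using hb)
      · push_neg at hb
        have hda : m 1 1 - m 0 0 ≠ 0 := by
          intro hd
          have hdd : m 1 1 = m 0 0 := by linear_combination hd
          have ha2 : (m 0 0 - 1) * (m 0 0 + 1) = 0 := by
            linear_combination hdet - m 0 0 * hdd + m 1 0 * hb
          rcases mul_eq_zero.mp ha2 with h' | h'
          · apply h1
            have e0 : m 0 0 = 1 := by linear_combination h'
            rw [hM, hdd, e0, hb, hc]
            ext i j; fin_cases i <;> fin_cases j <;> simp
          · apply hm1
            have e0 : m 0 0 = -1 := by linear_combination h'
            rw [hM, hdd, e0, hb, hc]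
            ext i j; fin_cases i <;> fin_cases j <;> simp
        exact step1core t (m 0 0) (m 0 1) (m 1 0) (m 1 1) 1 1 htr' hdet
          (by simpa [hb, hc] using fun hh => hda (by linear_combination hh))
  obtain ⟨P, hPdet, hPeq⟩ := main
  set cP : SL2 := ⟨P, hPdet⟩ with hcP
  refine ⟨cP⁻¹, ?_⟩
  have h : a₁ * cP = cP * Csl t := by
    apply Subtype.coe_injective
    simp only [Matrix.SpecialLinearGroup.coe_mul]
    show m * P = P * (Csl t : M2)
    rw [hM]
    exact hPeq
  rw [inv_inv, mul_assoc, h, inv_mul_cancel_left]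

lemma traceCmul (t p q r s : ℂ) :
    Matrix.trace (!![0,-1;1,t] * !![p,q;r,s]) = q - r + t*s := by
  rw [Matrix.mul_fin_two, Matrix.trace_fin_two]
  simp
  ring

lemma toCanonical (t t12 ζ : ℂ) (h2 : t12 ≠ 2) (ht : t12 ≠ t^2-2) (hζ0 : ζ ≠ 0)
    (hζ : ζ*ζ - t12*ζ + 1 = 0) (a₁ a₂ : SL2)
    (h11 : (a₁:M2) ≠ 1) (h1m : (a₁:M2) ≠ -1)
    (htr1 : Matrix.trace (a₁:M2) = t) (htr2 : Matrix.trace (a₂:M2) = t)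
    (htr12 : Matrix.trace ((a₁*a₂ : SL2):M2) = t12) :
    ∃ c : SL2, c * a₁ * c⁻¹ = Csl t ∧ ((c*a₂*c⁻¹ : SL2):M2) = !![t,ζ;-ζ⁻¹,0] := by
  obtain ⟨c₁, hc₁⟩ := step1 t a₁ h11 h1m htr1
  set b : SL2 := c₁ * a₂ * c₁⁻¹ with hb
  set n : M2 := (b:M2) with hn
  have hps : n 0 0 + n 1 1 = t := by
    have h := trace_conj c₁ a₂
    rw [← hb, ← hn, Matrix.trace_fin_two] at h
    rw [h, htr2]
  have hdet : n 0 0 * n 1 1 - n 0 1 * n 1 0 = 1 := by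
    have := b.prop
    rwa [Matrix.det_fin_two] at this
  have hq : n 0 1 - n 1 0 + t * n 1 1 = t12 := by
    have e : Csl t * b = c₁ * (a₁ * a₂) * c₁⁻¹ := by
      rw [← hc₁, hb]; group
    have h := trace_conj c₁ (a₁ * a₂)
    rw [← e, htr12] at h
    have hcoe : ((Csl t * b : SL2) : M2) = !![0,-1;1,t] * n := by
      rw [Matrix.SpecialLinearGroup.coe_mul]; rfl
    rw [hcoe, Matrix.eta_fin_two n, traceCmul] at h
    exact h
  obtain ⟨h, hhdet, hhC, hhn⟩ :=
    step2 t t12 ζ (n 0 0) (n 0 1) (n 1 0) (n 1 1) h2 ht hζ0 hζ hps hdet hq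
  set c₂ : SL2 := ⟨h, hhdet⟩ with hc₂
  have hca : c₂ * Csl t * c₂⁻¹ = Csl t := by
    apply conj_eq_of
    exact hhC
  have hcb : ((c₂ * b * c₂⁻¹ : SL2) : M2) = !![t,ζ;-ζ⁻¹,0] := by
    apply coe_conj
    show h * n = _
    rw [Matrix.eta_fin_two n]
    exact hhn
  refine ⟨c₂ * c₁, ?_, ?_⟩
  · have e : c₂ * c₁ * a₁ * (c₂*c₁)⁻¹ = c₂ * (c₁ * a₁ * c₁⁻¹) * c₂⁻¹ := by group
    rw [e, hc₁, hca]
  · have e : c₂ * c₁ * a₂ * (c₂*c₁)⁻¹ = c₂ * b * c₂⁻¹ := by rw [hb]; group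
    rw [e, hcb]


/-- The trace of an element of SL(2,ℂ). -/
noncomputable def trSL (A : Matrix.SpecialLinearGroup (Fin 2) ℂ) : ℂ :=
  Matrix.trace (A : Matrix (Fin 2) (Fin 2) ℂ)

/-- Lemma 2.3(ii-1): given `t₁₂ ∈ B_t`, there exists a pair `(a₁, a₂) ∈ G(t)²` with
`tr(a₁a₂) = t₁₂`, and any two such pairs are conjugate by a single element of SL(2,ℂ). -/
theorem pair_exists_and_unique_up_to_conjugacy
    (t t₁₂ : ℂ) (h2 : t₁₂ ≠ 2) (ht : t₁₂ ≠ t ^ 2 - 2) :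
    (∃ a₁ a₂ : Matrix.SpecialLinearGroup (Fin 2) ℂ,
        (a₁ : Matrix (Fin 2) (Fin 2) ℂ) ≠ 1 ∧ (a₁ : Matrix (Fin 2) (Fin 2) ℂ) ≠ -1 ∧
        (a₂ : Matrix (Fin 2) (Fin 2) ℂ) ≠ 1 ∧ (a₂ : Matrix (Fin 2) (Fin 2) ℂ) ≠ -1 ∧
        trSL a₁ = t ∧ trSL a₂ = t ∧ trSL (a₁ * a₂) = t₁₂) ∧
    (∀ a₁ a₂ a₁' a₂' : Matrix.SpecialLinearGroup (Fin 2) ℂ,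
        (a₁ : Matrix (Fin 2) (Fin 2) ℂ) ≠ 1 → (a₁ : Matrix (Fin 2) (Fin 2) ℂ) ≠ -1 →
        (a₂ : Matrix (Fin 2) (Fin 2) ℂ) ≠ 1 → (a₂ : Matrix (Fin 2) (Fin 2) ℂ) ≠ -1 →
        (a₁' : Matrix (Fin 2) (Fin 2) ℂ) ≠ 1 → (a₁' : Matrix (Fin 2) (Fin 2) ℂ) ≠ -1 →
        (a₂' : Matrix (Fin 2) (Fin 2) ℂ) ≠ 1 → (a₂' : Matrix (Fin 2) (Fin 2) ℂ) ≠ -1 →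
        trSL a₁ = t → trSL a₂ = t → trSL (a₁ * a₂) = t₁₂ →
        trSL a₁' = t → trSL a₂' = t → trSL (a₁' * a₂') = t₁₂ →
        ∃ c : Matrix.SpecialLinearGroup (Fin 2) ℂ,
          c * a₁ * c⁻¹ = a₁' ∧ c * a₂ * c⁻¹ = a₂') := by
  obtain ⟨ζ, hζ⟩ : ∃ ζ : ℂ, ζ*ζ - t₁₂*ζ + 1 = 0 := by
    obtain ⟨τ, hτ⟩ := sq_ex (t₁₂^2 - 4)
    refine ⟨(t₁₂+τ)/2, ?_⟩
    field_simp
    first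
    | linear_combination hτ
    | linear_combination 2*hτ
    | linear_combination -hτ
  have hζ0 : ζ ≠ 0 := by rintro rfl; simp at hζ
  have hBdet : Matrix.det !![t,ζ;-ζ⁻¹,0] = 1 := by
    rw [Matrix.det_fin_two_of]
    field_simp
    ring
  constructor
  · refine ⟨Csl t, ⟨!![t,ζ;-ζ⁻¹,0], hBdet⟩, ?_, ?_, ?_, ?_, ?_, ?_, ?_⟩
    · intro h
      have := congrFun (congrFun h 1) 0
      simp [Csl, Matrix.one_apply] at this
    · intro h
      have := congrFun (congrFun h 1) 0
      simp [Csl, Matrix.one_apply] at this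
    · intro h
      have := congrFun (congrFun h 0) 1
      simp [Matrix.one_apply] at this
      exact hζ0 this
    · intro h
      have := congrFun (congrFun h 0) 1
      simp [Matrix.one_apply] at this
      exact hζ0 this
    · show Matrix.trace ((Csl t : SL2) : M2) = t
      simp [Csl, Matrix.trace_fin_two]
    · show Matrix.trace (!![t,ζ;-ζ⁻¹,0]) = t
      simp [Matrix.trace_fin_two]
    · show Matrix.trace ((_ : SL2) : M2) = t₁₂
      show Matrix.trace ((!![0,-1;1,t] : M2) * !![t,ζ;-ζ⁻¹,0]) = t₁₂
      rw [Matrix.mul_fin_two, Matrix.trace_fin_two]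
      simp
      field_simp
      linear_combination hζ
  · intro a₁ a₂ a₁' a₂' h11 h1m _ _ h11' h1m' _ _ htr1 htr2 htr12 htr1' htr2' htr12'
    obtain ⟨c, hc1, hc2⟩ := toCanonical t t₁₂ ζ h2 ht hζ0 hζ a₁ a₂ h11 h1m htr1 htr2 htr12
    obtain ⟨c', hc1', hc2'⟩ := toCanonical t t₁₂ ζ h2 ht hζ0 hζ a₁' a₂' h11' h1m' htr1' htr2' htr12'
    refine ⟨c'⁻¹ * c, ?_, ?_⟩
    · have e : (c'⁻¹*c) * a₁ * (c'⁻¹*c)⁻¹ = c'⁻¹ * (c * a₁ * c⁻¹) * c' := by group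
      rw [e, hc1, ← hc1']
      group
    · have e2 : c * a₂ * c⁻¹ = c' * a₂' * c'⁻¹ :=
        Subtype.coe_injective (hc2.trans hc2'.symm)
      have e : (c'⁻¹*c) * a₂ * (c'⁻¹*c)⁻¹ = c'⁻¹ * (c * a₂ * c⁻¹) * c' := by group
      rw [e, e2]
      group
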